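/- Every lattice L of the oscillator group G (a discrete subgroup with compact quotient G/L) of the form L = L₁ × L₂ × L₃ × L₄, where each Lᵢ is a subset of ℝ, is isomorphic as a group to Λ_{k,i} for some positive integer k and some i ∈ {0, π, π/2}. -/

import Mathlib

open Real

/-- The real 3-dimensional Heisenberg group, as `ℝ³` with the multiplication
`(x,y,z)·(x',y',z') = (x+x', y+y', z+z'+ (xy'-x'y)/2)`. -/
@[ext] structure Heis : Type where
  x : ℝ
  y : ℝ
  z : ℝ

namespace Heis

noncomputable instance : Mul Heis :=
  ⟨fun a b => ⟨a.x + b.x, a.y + b.y, a.z + b.z + (a.x * b.y - b.x * a.y) / 2⟩⟩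

instance : One Heis := ⟨⟨0, 0, 0⟩⟩

instance : Inv Heis := ⟨fun a => ⟨-a.x, -a.y, -a.z⟩⟩

@[simp] lemma mul_x (a b : Heis) : (a * b).x = a.x + b.x := rfl
@[simp] lemma mul_y (a b : Heis) : (a * b).y = a.y + b.y := rfl
@[simp] lemma mul_z (a b : Heis) :
    (a * b).z = a.z + b.z + (a.x * b.y - b.x * a.y) / 2 := rfl
@[simp] lemma one_x : (1 : Heis).x = 0 := rfl
@[simp] lemma one_y : (1 : Heis).y = 0 := rfl
@[simp] lemma one_z : (1 : Heis).z = 0 := rfl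
@[simp] lemma inv_x (a : Heis) : a⁻¹.x = -a.x := rfl
@[simp] lemma inv_y (a : Heis) : a⁻¹.y = -a.y := rfl
@[simp] lemma inv_z (a : Heis) : a⁻¹.z = -a.z := rfl

noncomputable instance : Group Heis where
  mul_assoc a b c := by ext <;> simp <;> ring
  one_mul a := by ext <;> simp
  mul_one a := by ext <;> simp
  inv_mul_cancel a := by ext <;> simp

end Heis

/-- The rotation action `α(t)` of `ℝ` on the Heisenberg group. -/
noncomputable def alphaMap (t : ℝ) (v : Heis) : Heis :=
  ⟨v.x * cos t + v.y * sin t, -v.x * sin t + v.y * cos t, v.z⟩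

@[simp] lemma alphaMap_x (t : ℝ) (v : Heis) :
    (alphaMap t v).x = v.x * cos t + v.y * sin t := rfl
@[simp] lemma alphaMap_y (t : ℝ) (v : Heis) :
    (alphaMap t v).y = -v.x * sin t + v.y * cos t := rfl
@[simp] lemma alphaMap_z (t : ℝ) (v : Heis) : (alphaMap t v).z = v.z := rfl

/-- The oscillator group `G = ℝ ⋉_α H₃(ℝ)`. -/
@[ext] structure Osc : Type where
  t : ℝ
  v : Heis

namespace Osc

noncomputable instance : Mul Osc := ⟨fun a b => ⟨a.t + b.t, a.v * alphaMap a.t b.v⟩⟩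
instance : One Osc := ⟨⟨0, 1⟩⟩
noncomputable instance : Inv Osc := ⟨fun a => ⟨-a.t, alphaMap (-a.t) a.v⁻¹⟩⟩

@[simp] lemma mul_t (a b : Osc) : (a * b).t = a.t + b.t := rfl
@[simp] lemma mul_v (a b : Osc) : (a * b).v = a.v * alphaMap a.t b.v := rfl
@[simp] lemma one_t : (1 : Osc).t = 0 := rfl
@[simp] lemma one_v : (1 : Osc).v = 1 := rfl
@[simp] lemma inv_t (a : Osc) : a⁻¹.t = -a.t := rfl
@[simp] lemma inv_v (a : Osc) : a⁻¹.v = alphaMap (-a.t) a.v⁻¹ := rfl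

lemma alphaMap_one (t : ℝ) : alphaMap t (1 : Heis) = 1 := by
  ext <;> simp

lemma alphaMap_mul (t : ℝ) (v w : Heis) :
    alphaMap t (v * w) = alphaMap t v * alphaMap t w := by
  ext
  · simp; ring
  · simp; ring
  · simp
    linear_combination (w.x * v.y - v.x * w.y) * (sin_sq_add_cos_sq t)

lemma alphaMap_add (s t : ℝ) (v : Heis) :
    alphaMap (s + t) v = alphaMap s (alphaMap t v) := by
  ext <;> simp [cos_add, sin_add] <;> ring

lemma alphaMap_zero (v : Heis) : alphaMap 0 v = v := by
  ext <;> simp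

noncomputable instance : Group Osc where
  mul_assoc a b c := by
    refine Osc.ext (by simp; ring) ?_
    simp only [Osc.mul_v, Osc.mul_t, alphaMap_mul, ← alphaMap_add]
    rw [mul_assoc]
  one_mul a := Osc.ext (by simp) (by simp [alphaMap_zero])
  mul_one a := Osc.ext (by simp) (by simp [alphaMap_one])
  inv_mul_cancel a := by
    refine Osc.ext (by simp) ?_
    simp only [Osc.mul_v, Osc.inv_v, Osc.inv_t, Osc.one_v]
    rw [← alphaMap_mul, inv_mul_cancel, alphaMap_one]

end Osc

/-- `Heis` carries the standard topology of `ℝ³`. -/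
noncomputable instance : TopologicalSpace Heis :=
  TopologicalSpace.induced (fun v => (v.x, v.y, v.z)) inferInstance

/-- `Osc` carries the standard topology of `ℝ⁴`. -/
noncomputable instance : TopologicalSpace Osc :=
  TopologicalSpace.induced (fun g => (g.t, g.v.x, g.v.y, g.v.z)) inferInstance

lemma cos_sin_int (n : ℤ) :
    ∃ a b : ℤ, cos (π / 2 * n) = a ∧ sin (π / 2 * n) = b := by
  induction n using Int.induction_on with
  | zero => exact ⟨1, 0, by simp, by simp⟩
  | succ n ih =>
    obtain ⟨a, b, ha, hb⟩ := ih
    have h : (((n : ℤ) + 1 : ℤ) : ℝ) = ((n : ℤ) : ℝ) + 1 := by push_cast; ring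
    refine ⟨-b, a, ?_, ?_⟩
    · rw [h, mul_add, mul_one, cos_add, ha, hb]
      push_cast
      simp
    · rw [h, mul_add, mul_one, sin_add, ha, hb]
      simp
  | pred n ih =>
    obtain ⟨a, b, ha, hb⟩ := ih
    have h : ((-(n : ℤ) - 1 : ℤ) : ℝ) = ((-(n : ℤ) : ℤ) : ℝ) - 1 := by push_cast; ring
    refine ⟨b, -a, ?_, ?_⟩
    · rw [h, mul_sub, mul_one, cos_sub, ha, hb]
      simp
    · rw [h, mul_sub, mul_one, sin_sub, ha, hb]
      push_cast
      simp

lemma cos_sin_int' (t : ℝ) (h : ∃ j : ℤ, t = π / 2 * j) :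
    ∃ a b : ℤ, cos t = a ∧ sin t = b := by
  obtain ⟨j, rfl⟩ := h
  exact cos_sin_int j

/-- The lattice `θℤ ⋉ Γ_k` in the oscillator group, for `θ` an integer multiple of `π/2`. -/
noncomputable def LamTheta (k : ℕ+) (θ : ℝ) (m : ℤ) (hθ : θ = π / 2 * m) : Subgroup Osc where
  carrier := {g | (∃ n : ℤ, g.t = θ * n) ∧ (∃ a : ℤ, g.v.x = a) ∧ (∃ b : ℤ, g.v.y = b) ∧
    (∃ c : ℤ, g.v.z = (c : ℝ) / (2 * ((k : ℕ) : ℝ)))}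
  one_mem' := ⟨⟨0, by simp⟩, ⟨0, by simp⟩, ⟨0, by simp⟩, ⟨0, by simp⟩⟩
  mul_mem' := by
    rintro g h ⟨⟨n₁, hn₁⟩, ⟨a₁, ha₁⟩, ⟨b₁, hb₁⟩, ⟨c₁, hc₁⟩⟩
      ⟨⟨n₂, hn₂⟩, ⟨a₂, ha₂⟩, ⟨b₂, hb₂⟩, ⟨c₂, hc₂⟩⟩
    obtain ⟨A, B, hA, hB⟩ := cos_sin_int' g.t ⟨m * n₁, by rw [hn₁, hθ]; push_cast; ring⟩
    have hk : ((k : ℕ) : ℝ) ≠ 0 := by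
      exact_mod_cast k.ne_zero
    refine ⟨⟨n₁ + n₂, ?_⟩, ⟨a₁ + (a₂ * A + b₂ * B), ?_⟩, ⟨b₁ + (-(a₂ * B) + b₂ * A), ?_⟩,
      ⟨c₁ + c₂ + (k : ℕ) * (a₁ * (-(a₂ * B) + b₂ * A) - (a₂ * A + b₂ * B) * b₁), ?_⟩⟩
    · simp only [Osc.mul_t, hn₁, hn₂]; push_cast; ring
    · simp only [Osc.mul_v, Heis.mul_x, alphaMap_x, ha₁, ha₂, hb₂, hA, hB]; push_cast; ring
    · simp only [Osc.mul_v, Heis.mul_y, alphaMap_y, hb₁, ha₂, hb₂, hA, hB]; push_cast; ring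
    · simp only [Osc.mul_v, Heis.mul_z, alphaMap_x, alphaMap_y, alphaMap_z,
        ha₁, hb₁, ha₂, hb₂, hc₁, hc₂, hA, hB]
      field_simp
      push_cast
      ring
  inv_mem' := by
    rintro g ⟨⟨n₁, hn₁⟩, ⟨a₁, ha₁⟩, ⟨b₁, hb₁⟩, ⟨c₁, hc₁⟩⟩
    obtain ⟨A, B, hA, hB⟩ := cos_sin_int' g.t ⟨m * n₁, by rw [hn₁, hθ]; push_cast; ring⟩
    refine ⟨⟨-n₁, ?_⟩, ⟨-(a₁ * A) + b₁ * B, ?_⟩, ⟨-(a₁ * B) - b₁ * A, ?_⟩, ⟨-c₁, ?_⟩⟩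
    · simp only [Osc.inv_t, hn₁]; push_cast; ring
    · simp only [Osc.inv_v, alphaMap_x, Heis.inv_x, Heis.inv_y, cos_neg, sin_neg,
        ha₁, hb₁, hA, hB]
      push_cast; ring
    · simp only [Osc.inv_v, alphaMap_y, Heis.inv_x, Heis.inv_y, cos_neg, sin_neg,
        ha₁, hb₁, hA, hB]
      push_cast; ring
    · simp only [Osc.inv_v, alphaMap_z, Heis.inv_z, hc₁]
      push_cast; ring

/-- The lattice `Λ_{k,0} = 2πℤ × Γ_k`. -/
noncomputable def Lam0 (k : ℕ+) : Subgroup Osc :=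
  LamTheta k (2 * π) 4 (by push_cast; ring)

/-- The lattice `Λ_{k,π} = πℤ × Γ_k`. -/
noncomputable def LamPi (k : ℕ+) : Subgroup Osc :=
  LamTheta k π 2 (by push_cast; ring)

/-- The lattice `Λ_{k,π/2} = (π/2)ℤ × Γ_k`. -/
noncomputable def LamPi2 (k : ℕ+) : Subgroup Osc :=
  LamTheta k (π / 2) 1 (by push_cast; ring)

/-- The lattice `Γ_k = ℤ × ℤ × (1/(2k))ℤ` in the Heisenberg group. -/
noncomputable def Gamma (k : ℕ+) : Subgroup Heis where
  carrier := {v | (∃ a : ℤ, v.x = a) ∧ (∃ b : ℤ, v.y = b) ∧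
    (∃ c : ℤ, v.z = (c : ℝ) / (2 * ((k : ℕ) : ℝ)))}
  one_mem' := ⟨⟨0, by simp⟩, ⟨0, by simp⟩, ⟨0, by simp⟩⟩
  mul_mem' := by
    rintro v w ⟨⟨a₁, ha₁⟩, ⟨b₁, hb₁⟩, ⟨c₁, hc₁⟩⟩ ⟨⟨a₂, ha₂⟩, ⟨b₂, hb₂⟩, ⟨c₂, hc₂⟩⟩
    have hk : ((k : ℕ) : ℝ) ≠ 0 := by exact_mod_cast k.ne_zero
    refine ⟨⟨a₁ + a₂, ?_⟩, ⟨b₁ + b₂, ?_⟩, ⟨c₁ + c₂ + (k : ℕ) * (a₁ * b₂ - a₂ * b₁), ?_⟩⟩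
    · simp [ha₁, ha₂]
    · simp [hb₁, hb₂]
    · simp only [Heis.mul_z, ha₁, hb₁, ha₂, hb₂, hc₁, hc₂]
      field_simp
      push_cast
      ring
  inv_mem' := by
    rintro v ⟨⟨a₁, ha₁⟩, ⟨b₁, hb₁⟩, ⟨c₁, hc₁⟩⟩
    refine ⟨⟨-a₁, by simp [ha₁]⟩, ⟨-b₁, by simp [hb₁]⟩, ⟨-c₁, ?_⟩⟩
    simp only [Heis.inv_z, hc₁]
    push_cast
    ring

/-- The subset `pℤ × qℤ × rℤ × sℤ` of the oscillator group. -/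
def prodSet (p q r s : ℝ) : Set Osc :=
  {g | (∃ n : ℤ, g.t = p * n) ∧ (∃ n : ℤ, g.v.x = q * n) ∧
    (∃ n : ℤ, g.v.y = r * n) ∧ (∃ n : ℤ, g.v.z = s * n)}


lemma cont_coords : Continuous (fun g : Osc => (g.t, g.v.x, g.v.y, g.v.z)) :=
  continuous_induced_dom

lemma cont_t : Continuous (fun g : Osc => g.t) := continuous_fst.comp cont_coords
lemma cont_x : Continuous (fun g : Osc => g.v.x) :=
  (continuous_fst.comp continuous_snd).comp cont_coords
lemma cont_y : Continuous (fun g : Osc => g.v.y) :=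
  (continuous_fst.comp (continuous_snd.comp continuous_snd)).comp cont_coords
lemma cont_z : Continuous (fun g : Osc => g.v.z) :=
  (continuous_snd.comp (continuous_snd.comp continuous_snd)).comp cont_coords

/-- If the quotient is compact, every continuous right-invariant function is bounded above. -/
lemma bddAbove_of_compact_quotient (S : Subgroup Osc) (hcpt : CompactSpace (Osc ⧸ S))
    (f : Osc → ℝ) (hf : Continuous f) (hinv : ∀ g : Osc, ∀ s ∈ S, f (g * s) = f g) :
    BddAbove (Set.range f) := by
  have hwd : ∀ a b : Osc, @Setoid.r _ (QuotientGroup.leftRel S) a b → f a = f b := by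
    intro a b hab
    rw [QuotientGroup.leftRel_apply] at hab
    have : b = a * (a⁻¹ * b) := by group
    rw [this, hinv a _ hab]
  let F : Osc ⧸ S → ℝ := fun q => Quotient.liftOn' q f hwd
  have hF : Continuous F := hf.quotient_liftOn' hwd
  have hcpt' : IsCompact (Set.range F) := isCompact_range hF
  have hsub : Set.range f ⊆ Set.range F := by
    rintro x ⟨g, rfl⟩
    exact ⟨QuotientGroup.mk g, rfl⟩
  exact hcpt'.bddAbove.mono hsub

/-- Discreteness gives a uniform ε at the identity. -/
lemma exists_eps (S : Subgroup Osc) (hdisc : DiscreteTopology S) :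
    ∃ ε > 0, ∀ g ∈ S, |g.t| < ε → |g.v.x| < ε → |g.v.y| < ε → |g.v.z| < ε → g = 1 := by
  have h1 : IsOpen ({(1 : S)} : Set S) := isOpen_discrete _
  rw [isOpen_induced_iff] at h1
  obtain ⟨U, hU, hUeq⟩ := h1
  rw [isOpen_induced_iff] at hU
  obtain ⟨V, hV, hVeq⟩ := hU
  have h1V : ((0 : ℝ), (0 : ℝ), (0 : ℝ), (0 : ℝ)) ∈ V := by
    have h1 : (1 : S) ∈ Subtype.val ⁻¹' U := by rw [hUeq]; rfl
    have : (1 : Osc) ∈ U := h1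
    rw [← hVeq] at this
    exact this
  obtain ⟨ε, hε, hball⟩ := Metric.isOpen_iff.1 hV _ h1V
  refine ⟨ε, hε, fun g hg h1 h2 h3 h4 => ?_⟩
  have hgU : g ∈ U := by
    rw [← hVeq]
    apply hball
    rw [Metric.mem_ball]
    simp only [Prod.dist_eq, Real.dist_eq, sub_zero]
    simp only [max_lt_iff]
    exact ⟨h1, h2, h3, h4⟩
  have : (⟨g, hg⟩ : S) ∈ ({(1 : S)} : Set S) := by
    rw [← hUeq]; exact hgU
  simpa [Subtype.ext_iff] using this

/-- Angle-multiple trigonometry transfer. -/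
lemma trig_pow (u v : ℝ) (hc : cos u = cos v) (hs : sin u = sin v) (n : ℤ) :
    cos (u * n) = cos (v * n) ∧ sin (u * n) = sin (v * n) := by
  induction n using Int.induction_on with
  | zero => simp
  | succ n ih =>
    have hu : (u * ((n : ℤ) + 1 : ℤ) : ℝ) = u * n + u := by push_cast; ring
    have hv : (v * ((n : ℤ) + 1 : ℤ) : ℝ) = v * n + v := by push_cast; ring
    push_cast at hu hv ih ⊢
    rw [hu, hv, cos_add, sin_add, cos_add, sin_add, ih.1, ih.2, hc, hs]
    exact ⟨rfl, rfl⟩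
  | pred n ih =>
    have hu : (u * (-(n : ℤ) - 1 : ℤ) : ℝ) = u * (-(n : ℤ) : ℤ) - u := by push_cast; ring
    have hv : (v * (-(n : ℤ) - 1 : ℤ) : ℝ) = v * (-(n : ℤ) : ℤ) - v := by push_cast; ring
    push_cast at hu hv ih ⊢
    rw [hu, hv, cos_sub, sin_sub, cos_sub, sin_sub, ih.1, ih.2, hc, hs]
    exact ⟨rfl, rfl⟩

/-- Builder: a product lattice with matching trigonometry is isomorphic to `LamTheta`. -/
lemma buildIso (S : Subgroup Osc) (a b c d θ : ℝ) (m : ℤ) (hθ : θ = π / 2 * m) (k : ℕ+)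
    (ha : a ≠ 0) (hb : b ≠ 0) (hc : c ≠ 0) (hθ0 : θ ≠ 0)
    (ε : ℤ) (hε : ε = 1 ∨ ε = -1)
    (htrigc : ∀ n : ℤ, cos (θ * ((ε * n : ℤ) : ℝ)) = cos (a * n))
    (htrigs : ∀ n : ℤ, sin (θ * ((ε * n : ℤ) : ℝ)) = sin (a * n))
    (hyz : b = c ∨ ∀ n : ℤ, sin (a * n) = 0)
    (hk : b * c = 2 * d * (k : ℕ) ∨ b * c = -(2 * d * (k : ℕ)))
    (hS' : (S : Set Osc) = prodSet a b c d) :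
    Nonempty (S ≃* LamTheta k θ m hθ) := by
  have hk0 : ((k : ℕ) : ℝ) ≠ 0 := by exact_mod_cast k.ne_zero
  have hd : d ≠ 0 := by
    rcases hk with h | h <;> intro h0 <;> rw [h0] at h <;>
      simp at h <;> tauto
  have hε2 : ((ε : ℝ)) * ε = 1 := by rcases hε with rfl | rfl <;> norm_num
  -- coordinates of elements of S
  have hmem : ∀ g : Osc, g ∈ S ↔ g ∈ prodSet a b c d := by
    intro g; rw [← hS']; rfl
  -- trig at elements of S
  have htrig' : ∀ g : Osc, g ∈ S →
      cos ((ε * θ / a) * g.t) = cos g.t ∧ sin ((ε * θ / a) * g.t) = sin g.t := by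
    intro g hg
    obtain ⟨⟨n, hn⟩, -, -, -⟩ := (hmem g).1 hg
    have harg : (ε * θ / a) * g.t = θ * ((ε * n : ℤ) : ℝ) := by
      rw [hn]; push_cast; field_simp; try ring
    exact ⟨by rw [harg, htrigc n, hn], by rw [harg, htrigs n, hn]⟩
  refine ⟨{
    toFun := fun s => ⟨⟨(ε * θ / a) * (s : Osc).t,
      ⟨(s : Osc).v.x / b, (s : Osc).v.y / c, (s : Osc).v.z / (b * c)⟩⟩, ?_⟩
    invFun := fun g => ⟨⟨(ε * a / θ) * (g : Osc).t,
      ⟨b * (g : Osc).v.x, c * (g : Osc).v.y, (b * c) * (g : Osc).v.z⟩⟩, ?_⟩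
    left_inv := ?_
    right_inv := ?_
    map_mul' := ?_ }⟩
  · -- image of S lands in LamTheta
    obtain ⟨⟨n, hn⟩, ⟨p, hp⟩, ⟨q, hq⟩, ⟨r, hr⟩⟩ := (hmem _).1 s.2
    refine ⟨⟨ε * n, by rw [hn]; push_cast; field_simp; try ring⟩,
      ⟨p, by rw [hp]; field_simp⟩, ⟨q, by rw [hq]; field_simp⟩, ?_⟩
    rcases hk with h | h
    · exact ⟨r, by rw [hr, h]; field_simp; try ring⟩
    · exact ⟨-r, by rw [hr, h]; push_cast; field_simp; try ring⟩
  · -- preimage lands in S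
    obtain ⟨⟨n, hn⟩, ⟨p, hp⟩, ⟨q, hq⟩, ⟨r, hr⟩⟩ := g.2
    refine (hmem _).2 ⟨⟨ε * n, by rw [hn]; push_cast; field_simp; try ring⟩,
      ⟨p, by rw [hp]⟩, ⟨q, by rw [hq]⟩, ?_⟩
    rcases hk with h | h
    · exact ⟨r, by rw [hr]; field_simp; linear_combination (r : ℝ) * h⟩
    · exact ⟨-r, by rw [hr]; push_cast; field_simp; linear_combination (r : ℝ) * h⟩
  · intro s
    ext
    · show (ε * a / θ) * ((ε * θ / a) * (s : Osc).t) = (s : Osc).t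
      field_simp
      linear_combination (s : Osc).t * hε2
    · show b * ((s : Osc).v.x / b) = (s : Osc).v.x
      field_simp
    · show c * ((s : Osc).v.y / c) = (s : Osc).v.y
      field_simp
    · show (b * c) * ((s : Osc).v.z / (b * c)) = (s : Osc).v.z
      field_simp
  · intro g
    ext
    · show (ε * θ / a) * ((ε * a / θ) * (g : Osc).t) = (g : Osc).t
      field_simp
      linear_combination (g : Osc).t * hε2
    · show (b * (g : Osc).v.x) / b = (g : Osc).v.x
      field_simp
    · show (c * (g : Osc).v.y) / c = (g : Osc).v.y
      field_simp
    · show ((b * c) * (g : Osc).v.z) / (b * c) = (g : Osc).v.z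
      field_simp
  · intro s s'
    have hC := (htrig' _ s.2).1
    have hSn := (htrig' _ s.2).2
    have hsin0 : b = c ∨ sin (s : Osc).t = 0 := by
      rcases hyz with h | h
      · exact Or.inl h
      · obtain ⟨⟨n, hn⟩, -, -, -⟩ := (hmem _).1 s.2
        exact Or.inr (by rw [hn]; exact h n)
    apply Subtype.ext
    have hco : ((s * s' : S) : Osc) = (s : Osc) * (s' : Osc) := rfl
    dsimp only
    rw [hco]
    refine Osc.ext ?_ (Heis.ext ?_ ?_ ?_) <;>
      simp only [MulMemClass.mk_mul_mk, Osc.mul_t, Osc.mul_v, Heis.mul_x, Heis.mul_y,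
        Heis.mul_z, alphaMap_x, alphaMap_y, alphaMap_z, hC, hSn]
    · ring
    · rcases hsin0 with rfl | h0
      · field_simp; try ring
      · rw [h0]; field_simp; try ring
    · rcases hsin0 with rfl | h0
      · field_simp; try ring
      · rw [h0]; field_simp; try ring
    · rcases hsin0 with rfl | h0
      · field_simp; try ring
      · rw [h0]; field_simp; try ring

lemma mem_closure_gen (a x : ℝ) : x ∈ AddSubgroup.closure {a} ↔ ∃ n : ℤ, x = a * n := by
  rw [AddSubgroup.mem_closure_singleton]
  constructor
  · rintro ⟨n, rfl⟩; exact ⟨n, by rw [zsmul_eq_mul]; ring⟩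
  · rintro ⟨n, rfl⟩; exact ⟨n, by rw [zsmul_eq_mul]; ring⟩

lemma abs_cos_of_sin_eq_zero (t : ℝ) (h : sin t = 0) : |cos t| = 1 := by
  have h2 : (cos t - 1) * (cos t + 1) = 0 := by nlinarith [sin_sq_add_cos_sq t]
  rcases mul_eq_zero.1 h2 with h3 | h3
  · rw [show cos t = 1 by linarith]; simp
  · rw [show cos t = -1 by linarith]; simp

theorem statement16aux (L₁ L₂ L₃ L₄ : Set ℝ) (S : Subgroup Osc)
    (hS : (S : Set Osc) = {g : Osc | g.t ∈ L₁ ∧ g.v.x ∈ L₂ ∧ g.v.y ∈ L₃ ∧ g.v.z ∈ L₄})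
    (hdisc : DiscreteTopology S) (hcpt : CompactSpace (Osc ⧸ S)) :
    ∃ k : ℕ+, Nonempty (S ≃* Lam0 k) ∨ Nonempty (S ≃* LamPi k) ∨
      Nonempty (S ≃* LamPi2 k) := by
  have hmemS : ∀ g : Osc, g ∈ S ↔ (g.t ∈ L₁ ∧ g.v.x ∈ L₂ ∧ g.v.y ∈ L₃ ∧ g.v.z ∈ L₄) := by
    intro g; rw [← SetLike.mem_coe, hS]; exact Iff.rfl
  obtain ⟨h01, h02, h03, h04⟩ := (hmemS 1).1 S.one_mem
  have ht_mem : ∀ t ∈ L₁, (⟨t, ⟨0, 0, 0⟩⟩ : Osc) ∈ S :=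
    fun t ht => (hmemS _).2 ⟨ht, h02, h03, h04⟩
  have hx_mem : ∀ x ∈ L₂, (⟨0, ⟨x, 0, 0⟩⟩ : Osc) ∈ S :=
    fun x hx => (hmemS _).2 ⟨h01, hx, h03, h04⟩
  have hy_mem : ∀ y ∈ L₃, (⟨0, ⟨0, y, 0⟩⟩ : Osc) ∈ S :=
    fun y hy => (hmemS _).2 ⟨h01, h02, hy, h04⟩
  have hz_mem : ∀ z ∈ L₄, (⟨0, ⟨0, 0, z⟩⟩ : Osc) ∈ S :=
    fun z hz => (hmemS _).2 ⟨h01, h02, h03, hz⟩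
  -- the four coordinate subgroups
  let T₁ : AddSubgroup ℝ :=
    { carrier := L₁
      zero_mem' := h01
      add_mem' := by
        intro t t' ht ht'
        have := ((hmemS _).1 (mul_mem (ht_mem t ht) (ht_mem t' ht'))).1
        simpa using this
      neg_mem' := by
        intro t ht
        have := ((hmemS _).1 (inv_mem (ht_mem t ht))).1
        simpa using this }
  let T₂ : AddSubgroup ℝ :=
    { carrier := L₂
      zero_mem' := h02
      add_mem' := by
        intro t t' ht ht'
        have := ((hmemS _).1 (mul_mem (hx_mem t ht) (hx_mem t' ht'))).2.1
        simpa using this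
      neg_mem' := by
        intro t ht
        have := ((hmemS _).1 (inv_mem (hx_mem t ht))).2.1
        simpa using this }
  let T₃ : AddSubgroup ℝ :=
    { carrier := L₃
      zero_mem' := h03
      add_mem' := by
        intro t t' ht ht'
        have := ((hmemS _).1 (mul_mem (hy_mem t ht) (hy_mem t' ht'))).2.2.1
        simpa using this
      neg_mem' := by
        intro t ht
        have := ((hmemS _).1 (inv_mem (hy_mem t ht))).2.2.1
        simpa using this }
  let T₄ : AddSubgroup ℝ :=
    { carrier := L₄
      zero_mem' := h04
      add_mem' := by
        intro t t' ht ht'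
        have := ((hmemS _).1 (mul_mem (hz_mem t ht) (hz_mem t' ht'))).2.2.2
        simpa using this
      neg_mem' := by
        intro t ht
        have := ((hmemS _).1 (inv_mem (hz_mem t ht))).2.2.2
        simpa using this }
  -- discreteness: a uniform ε
  obtain ⟨ε₀, hε₀, hsep⟩ := exists_eps S hdisc
  have habs0 : |(0 : ℝ)| < ε₀ := by simpa using hε₀
  have hIoo : (Set.Ioo (0 : ℝ) ε₀).Nonempty := ⟨ε₀ / 2, by constructor <;> linarith⟩
  -- each coordinate subgroup is cyclic
  have hcyc1 : ∃ a : ℝ, ∀ x, x ∈ L₁ ↔ ∃ n : ℤ, x = a * n := by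
    rcases T₁.dense_or_cyclic with hd | ⟨a, hA⟩
    · exfalso
      obtain ⟨x, hx, hx2⟩ := hd.exists_mem_open isOpen_Ioo hIoo
      have h1 : (⟨x, ⟨0, 0, 0⟩⟩ : Osc) = 1 := by
        refine hsep _ (ht_mem x hx) ?_ habs0 habs0 habs0
        show |x| < ε₀
        rw [abs_of_pos hx2.1]; exact hx2.2
      have : x = 0 := congrArg Osc.t h1
      exact absurd this (ne_of_gt hx2.1)
    · exact ⟨a, fun x => by rw [show (x ∈ L₁ ↔ x ∈ T₁) from Iff.rfl, hA, mem_closure_gen]⟩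
  have hcyc2 : ∃ a : ℝ, ∀ x, x ∈ L₂ ↔ ∃ n : ℤ, x = a * n := by
    rcases T₂.dense_or_cyclic with hd | ⟨a, hA⟩
    · exfalso
      obtain ⟨x, hx, hx2⟩ := hd.exists_mem_open isOpen_Ioo hIoo
      have h1 : (⟨0, ⟨x, 0, 0⟩⟩ : Osc) = 1 := by
        refine hsep _ (hx_mem x hx) habs0 ?_ habs0 habs0
        show |x| < ε₀
        rw [abs_of_pos hx2.1]; exact hx2.2
      have : x = 0 := congrArg (fun g : Osc => g.v.x) h1
      exact absurd this (ne_of_gt hx2.1)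
    · exact ⟨a, fun x => by rw [show (x ∈ L₂ ↔ x ∈ T₂) from Iff.rfl, hA, mem_closure_gen]⟩
  have hcyc3 : ∃ a : ℝ, ∀ x, x ∈ L₃ ↔ ∃ n : ℤ, x = a * n := by
    rcases T₃.dense_or_cyclic with hd | ⟨a, hA⟩
    · exfalso
      obtain ⟨x, hx, hx2⟩ := hd.exists_mem_open isOpen_Ioo hIoo
      have h1 : (⟨0, ⟨0, x, 0⟩⟩ : Osc) = 1 := by
        refine hsep _ (hy_mem x hx) habs0 habs0 ?_ habs0
        show |x| < ε₀
        rw [abs_of_pos hx2.1]; exact hx2.2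
      have : x = 0 := congrArg (fun g : Osc => g.v.y) h1
      exact absurd this (ne_of_gt hx2.1)
    · exact ⟨a, fun x => by rw [show (x ∈ L₃ ↔ x ∈ T₃) from Iff.rfl, hA, mem_closure_gen]⟩
  have hcyc4 : ∃ a : ℝ, ∀ x, x ∈ L₄ ↔ ∃ n : ℤ, x = a * n := by
    rcases T₄.dense_or_cyclic with hd | ⟨a, hA⟩
    · exfalso
      obtain ⟨x, hx, hx2⟩ := hd.exists_mem_open isOpen_Ioo hIoo
      have h1 : (⟨0, ⟨0, 0, x⟩⟩ : Osc) = 1 := by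
        refine hsep _ (hz_mem x hx) habs0 habs0 habs0 ?_
        show |x| < ε₀
        rw [abs_of_pos hx2.1]; exact hx2.2
      have : x = 0 := congrArg (fun g : Osc => g.v.z) h1
      exact absurd this (ne_of_gt hx2.1)
    · exact ⟨a, fun x => by rw [show (x ∈ L₄ ↔ x ∈ T₄) from Iff.rfl, hA, mem_closure_gen]⟩
  obtain ⟨a, hL1⟩ := hcyc1
  obtain ⟨b, hL2⟩ := hcyc2
  obtain ⟨c, hL3⟩ := hcyc3
  obtain ⟨d, hL4⟩ := hcyc4
  -- key boundedness contradiction machine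
  have key : ∀ f : Osc → ℝ, Continuous f → (∀ g : Osc, ∀ s ∈ S, f (g * s) = f g) →
      (∀ M : ℝ, ∃ g : Osc, f g = |M| + 1) → False := by
    intro f hf hinv hsur
    obtain ⟨M, hM⟩ := bddAbove_of_compact_quotient S hcpt f hf hinv
    obtain ⟨g, hg⟩ := hsur M
    have h1 := hM (Set.mem_range_self g)
    rw [hg] at h1
    have := le_abs_self M
    linarith
  -- a ≠ 0
  have ha : a ≠ 0 := by
    rintro rfl
    have ht0 : ∀ s ∈ S, Osc.t s = 0 := by
      intro s hs
      obtain ⟨n, hn⟩ := (hL1 _).1 ((hmemS s).1 hs).1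
      simpa using hn
    refine key (fun g => |g.t|) cont_t.abs (fun g s hs => ?_) (fun M => ?_)
    · show |(g * s).t| = |g.t|
      rw [Osc.mul_t, ht0 s hs, add_zero]
    · exact ⟨⟨|M| + 1, ⟨0, 0, 0⟩⟩, abs_of_nonneg (by positivity)⟩
  -- b ≠ 0
  have hb : b ≠ 0 := by
    rintro rfl
    have hx0 : ∀ s ∈ S, (Osc.v s).x = 0 := by
      intro s hs
      obtain ⟨n, hn⟩ := (hL2 _).1 ((hmemS s).1 hs).2.1
      simpa using hn
    by_cases hc0 : c = 0
    · subst hc0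
      have hy0 : ∀ s ∈ S, (Osc.v s).y = 0 := by
        intro s hs
        obtain ⟨n, hn⟩ := (hL3 _).1 ((hmemS s).1 hs).2.2.1
        simpa using hn
      refine key (fun g => |g.v.x|) cont_x.abs (fun g s hs => ?_) (fun M => ?_)
      · show |(g * s).v.x| = |g.v.x|
        rw [Osc.mul_v, Heis.mul_x, alphaMap_x, hx0 s hs, hy0 s hs]
        norm_num
      · exact ⟨⟨0, ⟨|M| + 1, 0, 0⟩⟩, abs_of_nonneg (by positivity)⟩
    · -- c ≠ 0 : rotations in L₁ have sin = 0
      have hsin : ∀ s ∈ S, sin s.t = 0 := by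
        intro s hs
        have hgt : (⟨s.t, ⟨0, 0, 0⟩⟩ : Osc) ∈ S := ht_mem _ ((hmemS s).1 hs).1
        have hgy : (⟨0, ⟨0, c, 0⟩⟩ : Osc) ∈ S := hy_mem c ((hL3 c).2 ⟨1, by simp⟩)
        have hmul := ((hmemS _).1 (mul_mem hgt hgy)).2.1
        obtain ⟨n, hn⟩ := (hL2 _).1 hmul
        simp at hn
        rcases hn with hn | hn
        · exact absurd hn hc0
        · exact hn
      refine key (fun g => |g.v.x * cos g.t - g.v.y * sin g.t|)
        ((((cont_x.mul (Real.continuous_cos.comp cont_t))).sub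
          (cont_y.mul (Real.continuous_sin.comp cont_t))).abs) (fun g s hs => ?_) (fun M => ?_)
      · show |(g * s).v.x * cos (g * s).t - (g * s).v.y * sin (g * s).t| = _
        have heq : (g * s).v.x * cos (g * s).t - (g * s).v.y * sin (g * s).t =
            cos s.t * (g.v.x * cos g.t - g.v.y * sin g.t) := by
          simp only [Osc.mul_v, Osc.mul_t, Heis.mul_x, Heis.mul_y, alphaMap_x, alphaMap_y,
            cos_add, sin_add, hsin s hs, hx0 s hs]
          ring
        rw [heq, abs_mul, abs_cos_of_sin_eq_zero s.t (hsin s hs), one_mul]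
      · refine ⟨⟨0, ⟨|M| + 1, 0, 0⟩⟩, ?_⟩
        show |(|M| + 1) * cos 0 - 0 * sin 0| = |M| + 1
        rw [cos_zero, sin_zero]
        rw [show (|M| + 1) * 1 - 0 * 0 = |M| + 1 by ring]
        exact abs_of_nonneg (by positivity)
  -- c ≠ 0
  have hc : c ≠ 0 := by
    rintro rfl
    have hy0 : ∀ s ∈ S, (Osc.v s).y = 0 := by
      intro s hs
      obtain ⟨n, hn⟩ := (hL3 _).1 ((hmemS s).1 hs).2.2.1
      simpa using hn
    have hsin : ∀ s ∈ S, sin s.t = 0 := by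
      intro s hs
      have hgt : (⟨s.t, ⟨0, 0, 0⟩⟩ : Osc) ∈ S := ht_mem _ ((hmemS s).1 hs).1
      have hgx : (⟨0, ⟨b, 0, 0⟩⟩ : Osc) ∈ S := hx_mem b ((hL2 b).2 ⟨1, by simp⟩)
      have hmul := ((hmemS _).1 (mul_mem hgt hgx)).2.2.1
      obtain ⟨n, hn⟩ := (hL3 _).1 hmul
      simp at hn
      rcases hn with hn | hn
      · exact absurd hn hb
      · exact hn
    refine key (fun g => |g.v.x * sin g.t + g.v.y * cos g.t|)
      ((((cont_x.mul (Real.continuous_sin.comp cont_t))).add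
        (cont_y.mul (Real.continuous_cos.comp cont_t))).abs) (fun g s hs => ?_) (fun M => ?_)
    · show |(g * s).v.x * sin (g * s).t + (g * s).v.y * cos (g * s).t| = _
      have heq : (g * s).v.x * sin (g * s).t + (g * s).v.y * cos (g * s).t =
          cos s.t * (g.v.x * sin g.t + g.v.y * cos g.t) := by
        simp only [Osc.mul_v, Osc.mul_t, Heis.mul_x, Heis.mul_y, alphaMap_x, alphaMap_y,
          cos_add, sin_add, hsin s hs, hy0 s hs]
        ring
      rw [heq, abs_mul, abs_cos_of_sin_eq_zero s.t (hsin s hs), one_mul]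
    · refine ⟨⟨0, ⟨0, |M| + 1, 0⟩⟩, ?_⟩
      show |0 * sin 0 + (|M| + 1) * cos 0| = |M| + 1
      rw [cos_zero, sin_zero]
      rw [show (0:ℝ) * 0 + (|M| + 1) * 1 = |M| + 1 by ring]
      exact abs_of_nonneg (by positivity)
  -- basic generators in S
  have hga : (⟨a, ⟨0, 0, 0⟩⟩ : Osc) ∈ S := ht_mem a ((hL1 a).2 ⟨1, by simp⟩)
  have hgx : (⟨0, ⟨b, 0, 0⟩⟩ : Osc) ∈ S := hx_mem b ((hL2 b).2 ⟨1, by simp⟩)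
  have hgy : (⟨0, ⟨0, c, 0⟩⟩ : Osc) ∈ S := hy_mem c ((hL3 c).2 ⟨1, by simp⟩)
  -- b*c/2 ∈ L₄
  have he : ∃ e : ℤ, b * c / 2 = d * e := by
    have := ((hmemS _).1 (mul_mem hgx hgy)).2.2.2
    obtain ⟨n, hn⟩ := (hL4 _).1 this
    exact ⟨n, by simpa using hn⟩
  obtain ⟨e, he⟩ := he
  have hd : d ≠ 0 := by
    rintro rfl
    rw [zero_mul] at he
    rcases mul_eq_zero.1 (by linarith : b * c = 0) with h | h
    · exact hb h
    · exact hc h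
  have he0 : e ≠ 0 := by
    rintro rfl
    push_cast at he
    rw [mul_zero] at he
    rcases mul_eq_zero.1 (by linarith : b * c = 0) with h | h
    · exact hb h
    · exact hc h
  -- S as a product lattice
  have hS' : (S : Set Osc) = prodSet a b c d := by
    rw [hS]
    ext g
    exact and_congr (hL1 _) (and_congr (hL2 _) (and_congr (hL3 _) (hL4 _)))
  -- cos a is an integer
  obtain ⟨N, hN⟩ : ∃ N : ℤ, cos a = N := by
    have := ((hmemS _).1 (mul_mem hga hgx)).2.1
    obtain ⟨n, hn⟩ := (hL2 _).1 this
    simp at hn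
    refine ⟨n, ?_⟩
    tauto
  obtain ⟨u, hu⟩ : ∃ u : ℤ, -(b * sin a) = c * u := by
    have := ((hmemS _).1 (mul_mem hga hgx)).2.2.1
    obtain ⟨n, hn⟩ := (hL3 _).1 this
    exact ⟨n, by simpa using hn⟩
  obtain ⟨w, hw⟩ : ∃ w : ℤ, c * sin a = b * w := by
    have := ((hmemS _).1 (mul_mem hga hgy)).2.1
    obtain ⟨n, hn⟩ := (hL2 _).1 this
    exact ⟨n, by simpa using hn⟩
  have hN3 : N = -1 ∨ N = 0 ∨ N = 1 := by
    have h1 : (N : ℝ) ≤ 1 := hN ▸ cos_le_one a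
    have h2 : (-1 : ℝ) ≤ N := hN ▸ neg_one_le_cos a
    have h1' : N ≤ 1 := by exact_mod_cast h1
    have h2' : -1 ≤ N := by exact_mod_cast h2
    omega
  set k : ℕ+ := ⟨e.natAbs, Int.natAbs_pos.2 he0⟩ with hkdef
  have hk' : ((k : ℕ) : ℝ) = (e.natAbs : ℝ) := rfl
  have hkc : b * c = 2 * d * (k : ℕ) ∨ b * c = -(2 * d * (k : ℕ)) := by
    rcases Int.natAbs_eq e with h | h
    · left
      have h2 : (e : ℝ) = ((k : ℕ) : ℝ) := by
        rw [hk', ← Int.cast_natCast (R := ℝ)]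
        exact congrArg (fun z : ℤ => (z : ℝ)) h
      linear_combination 2 * he + 2 * d * h2
    · right
      have h2 : (e : ℝ) = -((k : ℕ) : ℝ) := by
        rw [hk', ← Int.cast_natCast (R := ℝ), ← Int.cast_neg]
        exact congrArg (fun z : ℤ => (z : ℝ)) h
      linear_combination 2 * he + 2 * d * h2
  refine ⟨k, ?_⟩
  rcases hN3 with hN1 | hN1 | hN1
  · -- cos a = -1 : the case Λ_{k,π}
    rw [hN1] at hN
    push_cast at hN
    have hsa : sin a = 0 := by nlinarith [sin_sq_add_cos_sq a]
    refine Or.inr (Or.inl ?_)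
    unfold LamPi
    refine buildIso S a b c d π 2 (by push_cast; ring) k ha hb hc pi_ne_zero 1 (Or.inl rfl)
      (fun n => ?_) (fun n => ?_) (Or.inr fun n => ?_) hkc hS'
    · have := (trig_pow π a (by rw [cos_pi, hN]) (by rw [sin_pi, hsa]) n).1
      simpa using this
    · have := (trig_pow π a (by rw [cos_pi, hN]) (by rw [sin_pi, hsa]) n).2
      simpa using this
    · have h1 := (trig_pow a π (by rw [hN, cos_pi]) (by rw [hsa, sin_pi]) n).2
      rw [h1, mul_comm]
      exact sin_int_mul_pi n
  · -- cos a = 0 : the case Λ_{k,π/2}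
    rw [hN1] at hN
    push_cast at hN
    have hs2 : sin a = 1 ∨ sin a = -1 := by
      have h2 : (sin a - 1) * (sin a + 1) = 0 := by nlinarith [sin_sq_add_cos_sq a]
      rcases mul_eq_zero.1 h2 with h3 | h3
      · left; linarith
      · right; linarith
    -- |b| = |c|
    have huw : (u : ℝ) * w = -1 := by
      have h1 : (-(b * sin a)) * (c * sin a) = (c * u) * (b * w) := by rw [hu, hw]
      have hsin1 : sin a * sin a = 1 := by nlinarith [sin_sq_add_cos_sq a]
      have h2 : b * c * ((u : ℝ) * w + 1) = 0 := by
        linear_combination (-1 : ℝ) * h1 - b * c * hsin1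
      rcases mul_eq_zero.1 h2 with h | h
      · rcases mul_eq_zero.1 h with h' | h'
        · exact absurd h' hb
        · exact absurd h' hc
      · linarith
    have hcb : c = b ∨ c = -b := by
      have huZ : u * w = -1 := by exact_mod_cast huw
      have hu1 : u = 1 ∨ u = -1 := by
        rcases Int.isUnit_iff.1 (IsUnit.of_mul_eq_one (a := u) (-w) (by linarith [huZ]; )) with h | h
        · exact Or.inl h
        · exact Or.inr h
      rcases hs2 with hsa | hsa <;> rcases hu1 with rfl | rfl <;>
        rw [hsa] at hu <;> push_cast at hu <;>
        first
          | exact Or.inl (by linarith)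
          | exact Or.inr (by linarith)
    -- normalize the generator of L₃ to b
    have hL3' : ∀ x, x ∈ L₃ ↔ ∃ n : ℤ, x = b * n := by
      intro x
      rw [hL3]
      rcases hcb with h | h
      · rw [h]
      · rw [h]
        constructor
        · rintro ⟨n, rfl⟩; exact ⟨-n, by push_cast; ring⟩
        · rintro ⟨n, rfl⟩; exact ⟨-n, by push_cast; ring⟩
    have hS'' : (S : Set Osc) = prodSet a b b d := by
      rw [hS]
      ext g
      exact and_congr (hL1 _) (and_congr (hL2 _) (and_congr (hL3' _) (hL4 _)))
    have hkc' : b * b = 2 * d * (k : ℕ) ∨ b * b = -(2 * d * (k : ℕ)) := by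
      rcases hcb with h | h <;> rcases hkc with h2 | h2
      · left; rw [h] at h2; exact h2
      · right; rw [h] at h2; exact h2
      · right; rw [h] at h2; linarith
      · left; rw [h] at h2; linarith
    refine Or.inr (Or.inr ?_)
    unfold LamPi2
    rcases hs2 with hsa | hsa
    · refine buildIso S a b b d (π / 2) 1 (by push_cast; ring) k ha hb hb
        (by positivity) 1 (Or.inl rfl) (fun n => ?_) (fun n => ?_) (Or.inl rfl) hkc' hS''
      · have := (trig_pow (π / 2) a (by rw [cos_pi_div_two, hN]) (by rw [sin_pi_div_two, hsa]) n).1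
        simpa using this
      · have := (trig_pow (π / 2) a (by rw [cos_pi_div_two, hN]) (by rw [sin_pi_div_two, hsa]) n).2
        simpa using this
    · refine buildIso S a b b d (π / 2) 1 (by push_cast; ring) k ha hb hb
        (by positivity) (-1) (Or.inr rfl) (fun n => ?_) (fun n => ?_) (Or.inl rfl) hkc' hS''
      · have h1 := (trig_pow (-(π / 2)) a (by rw [cos_neg, cos_pi_div_two, hN])
          (by rw [sin_neg, sin_pi_div_two, hsa]) n).1
        rw [show π / 2 * ((-1 * n : ℤ) : ℝ) = -(π / 2) * n by push_cast; ring]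
        exact h1
      · have h1 := (trig_pow (-(π / 2)) a (by rw [cos_neg, cos_pi_div_two, hN])
          (by rw [sin_neg, sin_pi_div_two, hsa]) n).2
        rw [show π / 2 * ((-1 * n : ℤ) : ℝ) = -(π / 2) * n by push_cast; ring]
        exact h1
  · -- cos a = 1 : the case Λ_{k,0}
    rw [hN1] at hN
    push_cast at hN
    have hsa : sin a = 0 := by nlinarith [sin_sq_add_cos_sq a]
    refine Or.inl ?_
    unfold Lam0
    refine buildIso S a b c d (2 * π) 4 (by push_cast; ring) k ha hb hc
      (by positivity) 1 (Or.inl rfl) (fun n => ?_) (fun n => ?_) (Or.inr fun n => ?_) hkc hS'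
    · have := (trig_pow (2 * π) a (by rw [cos_two_pi, hN]) (by rw [sin_two_pi, hsa]) n).1
      simpa using this
    · have := (trig_pow (2 * π) a (by rw [cos_two_pi, hN]) (by rw [sin_two_pi, hsa]) n).2
      simpa using this
    · have := (trig_pow a 0 (by rw [hN, cos_zero]) (by rw [hsa, sin_zero]) n).2
      simpa using this


/-- Every lattice of the oscillator group of product form
`L = L₁ × L₂ × L₃ × L₄` with `Lᵢ ⊆ ℝ` is isomorphic as a group to `Λ_{k,0}`, `Λ_{k,π}` or
`Λ_{k,π/2}` for some positive integer `k`. -/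
theorem statement16 (L₁ L₂ L₃ L₄ : Set ℝ) (S : Subgroup Osc)
    (hS : (S : Set Osc) = {g : Osc | g.t ∈ L₁ ∧ g.v.x ∈ L₂ ∧ g.v.y ∈ L₃ ∧ g.v.z ∈ L₄})
    (hdisc : DiscreteTopology S) (hcpt : CompactSpace (Osc ⧸ S)) :
    ∃ k : ℕ+, Nonempty (S ≃* Lam0 k) ∨ Nonempty (S ≃* LamPi k) ∨
      Nonempty (S ≃* LamPi2 k) :=
  statement16aux L₁ L₂ L₃ L₄ S hS hdisc hcpt
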